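/- Let x* = (x*^{(1)},…,x*^{(n)}) be an extreme point of the feasible region P = {x : Σ_{i=1}^n A_i x^{(i)} = b_0 and x^{(i)} ∈ Q_i for all i} of the block-structured LP. Then for every i ∈ {1,…,n}, the minimal face of Q_i containing x*^{(i)} has affine dimension at most r. -/

import Mathlib

open Finset

/-- `Q` is a polyhedron: the solution set of finitely many linear inequalities. -/
def IsPolyhedron {t : ℕ} (Q : Set (Fin t → ℝ)) : Prop :=
  ∃ (m : ℕ) (D : Matrix (Fin m) (Fin t) ℝ) (p : Fin m → ℝ),
    Q = {x | ∀ k, ∑ j, D k j * x j ≤ p k}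

/-- `F` is a face of `Q`: the set of maximizers over `Q` of some linear functional. -/
def IsFaceOf {t : ℕ} (F Q : Set (Fin t → ℝ)) : Prop :=
  ∃ c : Fin t → ℝ, F = {x | x ∈ Q ∧ ∀ y ∈ Q, ∑ j, c j * y j ≤ ∑ j, c j * x j}

/-- The minimal face of `Q` containing `x`: the intersection of all faces of `Q`
containing `x`. -/
def minimalFace {t : ℕ} (Q : Set (Fin t → ℝ)) (x : Fin t → ℝ) : Set (Fin t → ℝ) :=
  {y | ∀ F, IsFaceOf F Q → x ∈ F → y ∈ F}

set_option maxHeartbeats 1000000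

/-- At an extreme point of the feasible region of the
block-structured LP, the minimal face of each `Q i` containing the block
`x* i` has affine dimension at most `r`. -/
theorem vertex_minimal_face_dimension
    (n r : ℕ) (hn : 1 ≤ n) (hr : 1 ≤ r)
    (t : Fin n → ℕ) (ht : ∀ i, 1 ≤ t i)
    (A : (i : Fin n) → Matrix (Fin r) (Fin (t i)) ℤ)
    (b0 : Fin r → ℤ)
    (Q : (i : Fin n) → Set (Fin (t i) → ℝ))
    (hQpoly : ∀ i, IsPolyhedron (Q i))
    (hQnonneg : ∀ i, ∀ x ∈ Q i, ∀ j, 0 ≤ x j)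
    (P : Set ((i : Fin n) → Fin (t i) → ℝ))
    (hP : P =
      {x | (∀ k, ∑ i, ∑ j, (A i k j : ℝ) * x i j = (b0 k : ℝ)) ∧ ∀ i, x i ∈ Q i})
    (xstar : (i : Fin n) → Fin (t i) → ℝ)
    (hvert : xstar ∈ Set.extremePoints ℝ P) :
    ∀ i, Module.finrank ℝ (vectorSpan ℝ (minimalFace (Q i) (xstar i))) ≤ r := by
  intro i
  obtain ⟨m, D, p, hQ⟩ := hQpoly i
  set x : Fin (t i) → ℝ := xstar i with hxdef
  have hxP : xstar ∈ P := hvert.1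
  rw [hP] at hxP
  have hxQ : x ∈ Q i := hxP.2 i
  have hxQ' : ∀ k, ∑ j, D k j * x j ≤ p k := by rw [hQ] at hxQ; exact hxQ
  -- active constraints
  set I : Finset (Fin m) := univ.filter (fun k => ∑ j, D k j * x j = p k) with hI
  set c : Fin (t i) → ℝ := fun j => ∑ k ∈ I, D k j with hc
  have hswap : ∀ y : Fin (t i) → ℝ, ∑ j, c j * y j = ∑ k ∈ I, ∑ j, D k j * y j := by
    intro y
    simp only [hc, Finset.sum_mul]
    exact Finset.sum_comm
  have hxc : ∑ j, c j * x j = ∑ k ∈ I, p k := by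
    rw [hswap]
    refine Finset.sum_congr rfl fun k hk => ?_
    exact (Finset.mem_filter.mp hk).2
  set F : Set (Fin (t i) → ℝ) :=
    {y | y ∈ Q i ∧ ∀ z ∈ Q i, ∑ j, c j * z j ≤ ∑ j, c j * y j} with hF
  have hface : IsFaceOf F (Q i) := ⟨c, rfl⟩
  have hxF : x ∈ F := by
    refine ⟨hxQ, fun z hz => ?_⟩
    rw [hswap, hxc]
    refine Finset.sum_le_sum fun k _ => ?_
    rw [hQ] at hz; exact hz k
  -- every point of the minimal face satisfies the active equalities
  have hactive : ∀ y ∈ minimalFace (Q i) x, ∀ k ∈ I, ∑ j, D k j * y j = p k := by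
    intro y hy k hk
    obtain ⟨hyQ, hymax⟩ := hy F hface hxF
    have hyQ' : ∀ k, ∑ j, D k j * y j ≤ p k := by rw [hQ] at hyQ; exact hyQ
    have hle : ∀ k ∈ I, ∑ j, D k j * y j ≤ p k := fun k _ => hyQ' k
    have hge : ∑ k ∈ I, p k ≤ ∑ k ∈ I, ∑ j, D k j * y j := by
      have h := hymax x hxQ
      rw [hxc, hswap] at h
      exact h
    have heq : ∑ k ∈ I, ∑ j, D k j * y j = ∑ k ∈ I, p k :=
      le_antisymm (Finset.sum_le_sum hle) hge
    exact (Finset.sum_eq_sum_iff_of_le hle).mp heq k hk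
  -- the vectorSpan kills the active rows
  have hVker : ∀ d ∈ vectorSpan ℝ (minimalFace (Q i) x), ∀ k ∈ I,
      ∑ j, D k j * d j = 0 := by
    intro d hd k hk
    let L : (Fin (t i) → ℝ) →ₗ[ℝ] ℝ :=
      { toFun := fun v => ∑ j, D k j * v j
        map_add' := by intro a b; simp [mul_add, Finset.sum_add_distrib]
        map_smul' := by
          intro s a
          simp only [Pi.smul_apply, smul_eq_mul, RingHom.id_apply, Finset.mul_sum]
          exact Finset.sum_congr rfl fun j _ => by ring }
    have hsub : vectorSpan ℝ (minimalFace (Q i) x) ≤ LinearMap.ker L := by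
      rw [vectorSpan_def]
      refine Submodule.span_le.mpr ?_
      rintro v hv
      obtain ⟨a, ha, b, hb, rfl⟩ := Set.mem_vsub.mp hv
      have ha' := hactive a ha k hk
      have hb' := hactive b hb k hk
      simp only [SetLike.mem_coe, LinearMap.mem_ker]
      show ∑ j, D k j * (a -ᵥ b) j = 0
      have : ∀ j, (a -ᵥ b) j = a j - b j := fun j => rfl
      simp only [this, mul_sub, Finset.sum_sub_distrib, ha', hb', sub_self]
    exact hsub hd
  -- the linear map given by A i
  let Ψ : (Fin (t i) → ℝ) →ₗ[ℝ] (Fin r → ℝ) :=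
    { toFun := fun d k => ∑ j, (A i k j : ℝ) * d j
      map_add' := by intro a b; funext k; simp [mul_add, Finset.sum_add_distrib]
      map_smul' := by
        intro s a; funext k
        simp only [Pi.smul_apply, smul_eq_mul, RingHom.id_apply, Finset.mul_sum]
        exact Finset.sum_congr rfl fun j _ => by ring }
  set V := vectorSpan ℝ (minimalFace (Q i) x) with hV
  -- key injectivity claim
  have hinj : ∀ d ∈ V, (∀ k, ∑ j, (A i k j : ℝ) * d j = 0) → d = 0 := by
    intro d hdV hA0
    by_contra hd0
    have hslack : ∀ k, k ∉ I → ∑ j, D k j * x j < p k := by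
      intro k hk
      rcases lt_or_eq_of_le (hxQ' k) with h | h
      · exact h
      · exact absurd (Finset.mem_filter.mpr ⟨Finset.mem_univ k, h⟩) hk
    set g : Fin m → ℝ := fun k =>
      (p k - ∑ j, D k j * x j) / (|∑ j, D k j * d j| + 1) with hg
    set S : Finset (Fin m) := univ \ I with hS
    set T : Finset ℝ := insert (1:ℝ) (S.image g) with hT
    have hTne : T.Nonempty := Finset.insert_nonempty _ _
    set ε : ℝ := T.min' hTne with hε
    have hεpos : 0 < ε := by
      have hall : ∀ a ∈ T, 0 < a := by
        intro a haT
        rcases Finset.mem_insert.mp haT with h | h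
        · rw [h]; norm_num
        · obtain ⟨k, hk, hk2⟩ := Finset.mem_image.mp h
          have hkI : k ∉ I := (Finset.mem_sdiff.mp hk).2
          rw [← hk2]
          exact div_pos (sub_pos.mpr (hslack k hkI)) (by positivity)
      exact hall ε (T.min'_mem hTne)
    have hεle : ∀ k, k ∉ I → ε ≤ g k := by
      intro k hk
      refine Finset.min'_le _ _ ?_
      rw [hT]
      exact Finset.mem_insert_of_mem
        (Finset.mem_image_of_mem g (Finset.mem_sdiff.mpr ⟨Finset.mem_univ k, hk⟩))
    -- x + s d ∈ Q i whenever |s| = ε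
    have hmemQ : ∀ s : ℝ, |s| = ε → (fun j => x j + s * d j) ∈ Q i := by
      intro s hs
      rw [hQ]
      intro k
      have hexpand : ∑ j, D k j * (x j + s * d j)
          = (∑ j, D k j * x j) + s * ∑ j, D k j * d j := by
        rw [Finset.mul_sum, ← Finset.sum_add_distrib]
        exact Finset.sum_congr rfl fun j _ => by ring
      show ∑ j, D k j * (x j + s * d j) ≤ p k
      rw [hexpand]
      by_cases hk : k ∈ I
      · rw [hVker d hdV k hk, mul_zero, add_zero]
        exact le_of_eq (Finset.mem_filter.mp hk).2
      · have h1 : s * ∑ j, D k j * d j ≤ ε * |∑ j, D k j * d j| := by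
          calc s * ∑ j, D k j * d j ≤ |s * ∑ j, D k j * d j| := le_abs_self _
            _ = ε * |∑ j, D k j * d j| := by rw [abs_mul, hs]
        have h2 : ε * |∑ j, D k j * d j| < p k - ∑ j, D k j * x j := by
          set u : ℝ := |∑ j, D k j * d j| with hu
          have hu0 : 0 ≤ u := abs_nonneg _
          have hPk : 0 < p k - ∑ j, D k j * x j := sub_pos.mpr (hslack k hk)
          have hgu : g k * u < p k - ∑ j, D k j * x j := by
            rw [hg]
            rw [div_mul_eq_mul_div]
            rw [div_lt_iff₀ (by positivity)]
            nlinarith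
          have : ε * u ≤ g k * u := mul_le_mul_of_nonneg_right (hεle k hk) hu0
          linarith
        linarith
    set y1 : Fin (t i) → ℝ := fun j => x j + ε * d j with hy1
    set y2 : Fin (t i) → ℝ := fun j => x j + (-ε) * d j with hy2
    have hy1Q : y1 ∈ Q i := hmemQ ε (abs_of_pos hεpos)
    have hy2Q : y2 ∈ Q i := hmemQ (-ε) (by rw [abs_neg]; exact abs_of_pos hεpos)
    -- updating block i keeps feasibility
    have hupd : ∀ y : Fin (t i) → ℝ, y ∈ Q i →
        (∀ k, ∑ j, (A i k j : ℝ) * y j = ∑ j, (A i k j : ℝ) * x j) →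
        Function.update xstar i y ∈ P := by
      intro y hyQ hyA
      rw [hP]
      constructor
      · intro k
        have hfun : (fun i' => ∑ j, (A i' k j : ℝ) * (Function.update xstar i y) i' j)
            = Function.update (fun i' => ∑ j, (A i' k j : ℝ) * xstar i' j) i
                (∑ j, (A i k j : ℝ) * y j) := by
          funext i'
          by_cases h : i' = i
          · subst h; simp
          · simp [Function.update_of_ne h]
        calc ∑ i', ∑ j, (A i' k j : ℝ) * (Function.update xstar i y) i' j
            = ∑ i', Function.update (fun i' => ∑ j, (A i' k j : ℝ) * xstar i' j) i
                (∑ j, (A i k j : ℝ) * y j) i' := by rw [hfun]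
          _ = (∑ j, (A i k j : ℝ) * y j)
              + ∑ i' ∈ univ \ {i}, ∑ j, (A i' k j : ℝ) * xstar i' j := by
                rw [Finset.sum_update_of_mem (Finset.mem_univ i)]
          _ = (∑ j, (A i k j : ℝ) * x j)
              + ∑ i' ∈ univ \ {i}, ∑ j, (A i' k j : ℝ) * xstar i' j := by rw [hyA k]
          _ = ∑ i', Function.update (fun i' => ∑ j, (A i' k j : ℝ) * xstar i' j) i
                (∑ j, (A i k j : ℝ) * x j) i' := by
                rw [Finset.sum_update_of_mem (Finset.mem_univ i)]
          _ = ∑ i', ∑ j, (A i' k j : ℝ) * xstar i' j := by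
                refine Finset.sum_congr rfl fun i' _ => ?_
                by_cases h : i' = i
                · subst h; simp [hxdef]
                · simp [Function.update_of_ne h]
          _ = (b0 k : ℝ) := hxP.1 k
      · intro i'
        by_cases h : i' = i
        · subst h; simpa using hyQ
        · rw [Function.update_of_ne h]; exact hxP.2 i'
    have hy1A : ∀ k, ∑ j, (A i k j : ℝ) * y1 j = ∑ j, (A i k j : ℝ) * x j := by
      intro k
      rw [hy1]
      have : ∑ j, (A i k j : ℝ) * (x j + ε * d j)
          = (∑ j, (A i k j : ℝ) * x j) + ε * ∑ j, (A i k j : ℝ) * d j := by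
        rw [Finset.mul_sum, ← Finset.sum_add_distrib]
        exact Finset.sum_congr rfl fun j _ => by ring
      rw [this, hA0 k, mul_zero, add_zero]
    have hy2A : ∀ k, ∑ j, (A i k j : ℝ) * y2 j = ∑ j, (A i k j : ℝ) * x j := by
      intro k
      rw [hy2]
      have : ∑ j, (A i k j : ℝ) * (x j + (-ε) * d j)
          = (∑ j, (A i k j : ℝ) * x j) + (-ε) * ∑ j, (A i k j : ℝ) * d j := by
        rw [Finset.mul_sum, ← Finset.sum_add_distrib]
        exact Finset.sum_congr rfl fun j _ => by ring
      rw [this, hA0 k, mul_zero, add_zero]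
    have hz1P : Function.update xstar i y1 ∈ P := hupd y1 hy1Q hy1A
    have hz2P : Function.update xstar i y2 ∈ P := hupd y2 hy2Q hy2A
    have hmid : xstar = (1/2 : ℝ) • Function.update xstar i y1
        + (1/2 : ℝ) • Function.update xstar i y2 := by
      funext i'
      by_cases h : i' = i
      · subst h
        funext j
        simp only [Pi.add_apply, Pi.smul_apply, Function.update_self, hy1, hy2,
          smul_eq_mul]
        ring
      · funext j
        simp only [Pi.add_apply, Pi.smul_apply, Function.update_of_ne h, smul_eq_mul]
        ring
    have hseg : xstar ∈ openSegment ℝ (Function.update xstar i y1)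
        (Function.update xstar i y2) :=
      ⟨1/2, 1/2, by norm_num, by norm_num, by norm_num, hmid.symm⟩
    have heq1 : Function.update xstar i y1 = xstar := hvert.2 hz1P hz2P hseg
    have hy1x : y1 = x := by
      have h := congrFun heq1 i
      rwa [Function.update_self] at h
    apply hd0
    funext j
    have h := congrFun hy1x j
    rw [hy1] at h
    have : ε * d j = 0 := by dsimp at h; linarith
    have := (mul_eq_zero.mp this).resolve_left (ne_of_gt hεpos)
    simpa using this
  -- conclude via finrank
  have hker : LinearMap.ker (Ψ.comp V.subtype) = ⊥ := by
    rw [LinearMap.ker_eq_bot']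
    rintro ⟨d, hd⟩ h0
    have h0' : Ψ d = 0 := h0
    have : ∀ k, ∑ j, (A i k j : ℝ) * d j = 0 := fun k => congrFun h0' k
    exact Subtype.ext (hinj d hd this)
  have hinj' : Function.Injective (Ψ.comp V.subtype) := LinearMap.ker_eq_bot.mp hker
  calc Module.finrank ℝ V ≤ Module.finrank ℝ (Fin r → ℝ) :=
        LinearMap.finrank_le_finrank_of_injective hinj'
    _ = r := Module.finrank_fin_fun ℝ
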